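/- arXiv:1202.2390 — 2 statements merged into one kernel-verified Lean document; each statement's English description precedes it below -/
import Mathlib

section
/- Suppose Φ is a continuous periodic cocycle on X with period T > 0, and let 𝒟 be a neighborhood closed and T-translation invariant collection of families of nonempty subsets of X. If Φ is 𝒟-pullback asymptotically compact in X and Φ has a closed measurable 𝒟-pullback absorbing set K in 𝒟, then Φ has a unique 𝒟-pullback attractor 𝒜 ∈ 𝒟, and 𝒜 is periodic with period T, i.e. 𝒜(θ₁(T)ω₁,ω₂) = 𝒜(ω₁,ω₂) for all ω₁ ∈ Ω₁ and ω₂ ∈ Ω₂. -/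
open MeasureTheory Filter Set Topology
open scoped ENNReal

namespace RDS

/-- A group of transformations of `α` parametrized by `ℝ`. -/
def IsGroupAction {α : Type*} (θ : ℝ → α → α) : Prop :=
  (∀ a, θ 0 a = a) ∧ ∀ s t : ℝ, ∀ a, θ (s + t) a = θ t (θ s a)

variable {Ω₁ Ω₂ X : Type*} [MetricSpace X] [MeasurableSpace X] [MeasurableSpace Ω₂]

/-- A continuous cocycle on `X` over the parametric dynamical systems
`(Ω₁, θ₁)` and `(Ω₂, ℱ₂, P, θ₂)` (Definition 2.1). -/
structure IsCocycle (θ₁ : ℝ → Ω₁ → Ω₁) (θ₂ : ℝ → Ω₂ → Ω₂)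
    (Φ : ℝ → Ω₁ → Ω₂ → X → X) : Prop where
  measurable : ∀ ω₁ : Ω₁,
    Measurable fun p : {t : ℝ // 0 ≤ t} × Ω₂ × X => Φ p.1.1 ω₁ p.2.1 p.2.2
  map_zero : ∀ (ω₁ : Ω₁) (ω₂ : Ω₂) (x : X), Φ 0 ω₁ ω₂ x = x
  cocycle : ∀ t τ : ℝ, 0 ≤ t → 0 ≤ τ → ∀ (ω₁ : Ω₁) (ω₂ : Ω₂) (x : X),
    Φ (t + τ) ω₁ ω₂ x = Φ t (θ₁ τ ω₁) (θ₂ τ ω₂) (Φ τ ω₁ ω₂ x)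
  continuous : ∀ t : ℝ, 0 ≤ t → ∀ (ω₁ : Ω₁) (ω₂ : Ω₂),
    Continuous fun x : X => Φ t ω₁ ω₂ x

/-- A complete orbit of the cocycle `Φ` (Definition 2.9). -/
def IsCompleteOrbit (θ₁ : ℝ → Ω₁ → Ω₁) (θ₂ : ℝ → Ω₂ → Ω₂)
    (Φ : ℝ → Ω₁ → Ω₂ → X → X) (ψ : ℝ → Ω₁ → Ω₂ → X) : Prop :=
  ∀ t τ : ℝ, 0 ≤ t → ∀ (ω₁ : Ω₁) (ω₂ : Ω₂),
    Φ t (θ₁ τ ω₁) (θ₂ τ ω₂) (ψ τ ω₁ ω₂) = ψ (t + τ) ω₁ ω₂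

/-- A `𝒟`-complete orbit of `Φ`. -/
def IsDCompleteOrbit (θ₁ : ℝ → Ω₁ → Ω₁) (θ₂ : ℝ → Ω₂ → Ω₂)
    (Φ : ℝ → Ω₁ → Ω₂ → X → X) (𝒟 : Set (Ω₁ → Ω₂ → Set X))
    (ψ : ℝ → Ω₁ → Ω₂ → X) : Prop :=
  IsCompleteOrbit θ₁ θ₂ Φ ψ ∧
    ∃ D ∈ 𝒟, ∀ (t : ℝ) (ω₁ : Ω₁) (ω₂ : Ω₂), ψ t ω₁ ω₂ ∈ D (θ₁ t ω₁) (θ₂ t ω₂)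

/-- Positive invariance of a family under `Φ`. -/
def PositivelyInvariant (θ₁ : ℝ → Ω₁ → Ω₁) (θ₂ : ℝ → Ω₂ → Ω₂)
    (Φ : ℝ → Ω₁ → Ω₂ → X → X) (B : Ω₁ → Ω₂ → Set X) : Prop :=
  ∀ t : ℝ, 0 ≤ t → ∀ (ω₁ : Ω₁) (ω₂ : Ω₂),
    Φ t ω₁ ω₂ '' B ω₁ ω₂ ⊆ B (θ₁ t ω₁) (θ₂ t ω₂)

/-- Invariance of a family under `Φ`. -/
def Invariant (θ₁ : ℝ → Ω₁ → Ω₁) (θ₂ : ℝ → Ω₂ → Ω₂)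
    (Φ : ℝ → Ω₁ → Ω₂ → X → X) (B : Ω₁ → Ω₂ → Set X) : Prop :=
  ∀ t : ℝ, 0 ≤ t → ∀ (ω₁ : Ω₁) (ω₂ : Ω₂),
    Φ t ω₁ ω₂ '' B ω₁ ω₂ = B (θ₁ t ω₁) (θ₂ t ω₂)

/-- Quasi-invariance of a family under `Φ`. -/
def QuasiInvariant (θ₁ : ℝ → Ω₁ → Ω₁) (θ₂ : ℝ → Ω₂ → Ω₂)
    (Φ : ℝ → Ω₁ → Ω₂ → X → X) (B : Ω₁ → Ω₂ → Set X) : Prop :=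
  ∀ y : Ω₁ → Ω₂ → X, (∀ (ω₁ : Ω₁) (ω₂ : Ω₂), y ω₁ ω₂ ∈ B ω₁ ω₂) →
    ∃ ψ : ℝ → Ω₁ → Ω₂ → X, IsCompleteOrbit θ₁ θ₂ Φ ψ ∧
      (∀ (ω₁ : Ω₁) (ω₂ : Ω₂), ψ 0 ω₁ ω₂ = y ω₁ ω₂) ∧
      ∀ (t : ℝ) (ω₁ : Ω₁) (ω₂ : Ω₂), ψ t ω₁ ω₂ ∈ B (θ₁ t ω₁) (θ₂ t ω₂)

/-- The Ω-limit set of a family `B` (Definition 2.13). -/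
def omegaLimit (θ₁ : ℝ → Ω₁ → Ω₁) (θ₂ : ℝ → Ω₂ → Ω₂)
    (Φ : ℝ → Ω₁ → Ω₂ → X → X) (B : Ω₁ → Ω₂ → Set X) (ω₁ : Ω₁) (ω₂ : Ω₂) : Set X :=
  ⋂ τ ∈ Ici (0 : ℝ), closure (⋃ t ∈ Ici τ,
    Φ t (θ₁ (-t) ω₁) (θ₂ (-t) ω₂) '' B (θ₁ (-t) ω₁) (θ₂ (-t) ω₂))

/-- `𝒟` is a collection of families of nonempty subsets of `X`. -/
def FamiliesOfNonemptySets (𝒟 : Set (Ω₁ → Ω₂ → Set X)) : Prop :=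
  ∀ D ∈ 𝒟, ∀ (ω₁ : Ω₁) (ω₂ : Ω₂), (D ω₁ ω₂).Nonempty

/-- Neighborhood closedness of the collection `𝒟` (Definition 2.5). -/
def NeighborhoodClosed (𝒟 : Set (Ω₁ → Ω₂ → Set X)) : Prop :=
  ∀ D ∈ 𝒟, ∃ ε : ℝ, 0 < ε ∧ ∀ B : Ω₁ → Ω₂ → Set X,
    (∀ (ω₁ : Ω₁) (ω₂ : Ω₂), (B ω₁ ω₂).Nonempty ∧
      B ω₁ ω₂ ⊆ Metric.thickening ε (D ω₁ ω₂)) → B ∈ 𝒟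

/-- Inclusion closedness of the collection `𝒟`. -/
def InclusionClosed (𝒟 : Set (Ω₁ → Ω₂ → Set X)) : Prop :=
  ∀ D ∈ 𝒟, ∀ B : Ω₁ → Ω₂ → Set X,
    (∀ (ω₁ : Ω₁) (ω₂ : Ω₂), (B ω₁ ω₂).Nonempty ∧ B ω₁ ω₂ ⊆ D ω₁ ω₂) → B ∈ 𝒟

/-- `𝒟`-pullback asymptotic compactness of `Φ` (Definition 2.16). -/
def AsymptoticallyCompact (θ₁ : ℝ → Ω₁ → Ω₁) (θ₂ : ℝ → Ω₂ → Ω₂)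
    (Φ : ℝ → Ω₁ → Ω₂ → X → X) (𝒟 : Set (Ω₁ → Ω₂ → Set X)) : Prop :=
  ∀ (ω₁ : Ω₁) (ω₂ : Ω₂), ∀ B ∈ 𝒟, ∀ (t : ℕ → ℝ) (x : ℕ → X),
    Tendsto t atTop atTop →
    (∀ n, x n ∈ B (θ₁ (-t n) ω₁) (θ₂ (-t n) ω₂)) →
    ∃ (φ : ℕ → ℕ) (y : X), StrictMono φ ∧
      Tendsto (fun n => Φ (t (φ n)) (θ₁ (-t (φ n)) ω₁) (θ₂ (-t (φ n)) ω₂) (x (φ n)))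
        atTop (𝓝 y)

/-- The Hausdorff semi-metric `d(C,B) = sup_{x ∈ C} inf_{b ∈ B} d(x,b)`,
valued in `ℝ≥0∞`. -/
noncomputable def hausSemidist (C B : Set X) : ℝ≥0∞ :=
  ⨆ x ∈ C, EMetric.infEdist x B

/-- The family `A` pullback attracts the family `B` under `Φ`. -/
def Attracts (θ₁ : ℝ → Ω₁ → Ω₁) (θ₂ : ℝ → Ω₂ → Ω₂)
    (Φ : ℝ → Ω₁ → Ω₂ → X → X) (B A : Ω₁ → Ω₂ → Set X) : Prop :=
  ∀ (ω₁ : Ω₁) (ω₂ : Ω₂),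
    Tendsto (fun t : ℝ => hausSemidist
        (Φ t (θ₁ (-t) ω₁) (θ₂ (-t) ω₂) '' B (θ₁ (-t) ω₁) (θ₂ (-t) ω₂)) (A ω₁ ω₂))
      atTop (𝓝 0)

/-- A `𝒟`-pullback absorbing set for `Φ` (Definition 2.15). -/
def IsAbsorbingSet (θ₁ : ℝ → Ω₁ → Ω₁) (θ₂ : ℝ → Ω₂ → Ω₂)
    (Φ : ℝ → Ω₁ → Ω₂ → X → X) (𝒟 : Set (Ω₁ → Ω₂ → Set X))
    (K : Ω₁ → Ω₂ → Set X) : Prop :=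
  K ∈ 𝒟 ∧ ∀ (ω₁ : Ω₁) (ω₂ : Ω₂), ∀ B ∈ 𝒟, ∃ T : ℝ, 0 < T ∧ ∀ t : ℝ, T ≤ t →
    Φ t (θ₁ (-t) ω₁) (θ₂ (-t) ω₂) '' B (θ₁ (-t) ω₁) (θ₂ (-t) ω₂) ⊆ K ω₁ ω₂

/-- A closed measurable (w.r.t. the `P`-completion of `ℱ₂`) `𝒟`-pullback
absorbing set for `Φ`. -/
def IsClosedMeasurableAbsorbingSet (θ₁ : ℝ → Ω₁ → Ω₁) (θ₂ : ℝ → Ω₂ → Ω₂)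
    (Φ : ℝ → Ω₁ → Ω₂ → X → X) (P : Measure Ω₂) (𝒟 : Set (Ω₁ → Ω₂ → Set X))
    (K : Ω₁ → Ω₂ → Set X) : Prop :=
  IsAbsorbingSet θ₁ θ₂ Φ 𝒟 K ∧
    (∀ (ω₁ : Ω₁) (ω₂ : Ω₂), IsClosed (K ω₁ ω₂) ∧ (K ω₁ ω₂).Nonempty) ∧
    ∀ (ω₁ : Ω₁) (x : X), NullMeasurable (fun ω₂ => Metric.infDist x (K ω₁ ω₂)) P

/-- A `𝒟`-pullback attractor for `Φ` (Definition 2.17). -/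
structure IsPullbackAttractor (θ₁ : ℝ → Ω₁ → Ω₁) (θ₂ : ℝ → Ω₂ → Ω₂)
    (Φ : ℝ → Ω₁ → Ω₂ → X → X) (P : Measure Ω₂) (𝒟 : Set (Ω₁ → Ω₂ → Set X))
    (A : Ω₁ → Ω₂ → Set X) : Prop where
  mem : A ∈ 𝒟
  compact : ∀ (ω₁ : Ω₁) (ω₂ : Ω₂), IsCompact (A ω₁ ω₂)
  measurable : ∀ (ω₁ : Ω₁) (x : X),
    NullMeasurable (fun ω₂ => Metric.infDist x (A ω₁ ω₂)) P
  invariant : Invariant θ₁ θ₂ Φ A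
  attracts : ∀ B ∈ 𝒟, Attracts θ₁ θ₂ Φ B A



open scoped Classical
open Metric

section Castaing

variable {Ω X : Type*} [MetricSpace X] [MeasurableSpace X] [BorelSpace X]
  [CompleteSpace X] [TopologicalSpace.SeparableSpace X] [MeasurableSpace Ω]

private lemma nat_sInf_eq_succ {S : Set ℕ} {n : ℕ} :
    sInf S = n + 1 ↔ (n + 1) ∈ S ∧ ∀ m < n + 1, m ∉ S := by
  constructor
  · intro h
    have hS : S.Nonempty := by
      by_contra h'
      rw [not_nonempty_iff_eq_empty] at h'
      rw [h', Nat.sInf_empty] at h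
      omega
    refine ⟨h ▸ Nat.sInf_mem hS, fun m hm => ?_⟩
    exact Nat.notMem_of_lt_sInf (h ▸ hm)
  · rintro ⟨h1, h2⟩
    refine le_antisymm (Nat.sInf_le h1) ?_
    by_contra h'
    push_neg at h'
    exact h2 _ h' (Nat.sInf_mem ⟨_, h1⟩)

private lemma measurable_sInf_nat {Q : ℕ → Ω → Prop}
    (hQ : ∀ n, MeasurableSet {ω | Q n ω}) :
    Measurable (fun ω => sInf {n | Q n ω}) := by
  apply measurable_to_countable'
  intro n
  match n with
  | 0 =>
    have : (fun ω => sInf {n | Q n ω}) ⁻¹' {0}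
        = {ω | Q 0 ω} ∪ (⋃ n, {ω | Q n ω})ᶜ := by
      ext ω
      simp only [mem_preimage, mem_singleton_iff, Nat.sInf_eq_zero, mem_union, mem_compl_iff,
        mem_iUnion, mem_setOf_eq, eq_empty_iff_forall_notMem, not_exists]
    rw [this]
    exact (hQ 0).union (MeasurableSet.iUnion hQ).compl
  | (m+1) =>
    have : (fun ω => sInf {n | Q n ω}) ⁻¹' {m+1}
        = {ω | Q (m+1) ω} ∩ ⋂ k < m+1, {ω | Q k ω}ᶜ := by
      ext ω
      simp only [mem_preimage, mem_singleton_iff, nat_sInf_eq_succ, mem_inter_iff, mem_iInter,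
        mem_compl_iff, mem_setOf_eq]
    rw [this]
    exact (hQ (m+1)).inter
      (MeasurableSet.iInter fun k => MeasurableSet.iInter fun _ => (hQ k).compl)

private lemma measurable_nat_cases {α : Type*} [MeasurableSpace α] {g : Ω → ℕ}
    (hg : Measurable g) {v : ℕ → Ω → α} (hv : ∀ i, Measurable (v i)) :
    Measurable fun ω => v (g ω) ω := by
  intro s hs
  have : (fun ω => v (g ω) ω) ⁻¹' s = ⋃ i, (g ⁻¹' {i}) ∩ ((v i) ⁻¹' s) := by
    ext ω; simp only [mem_preimage, mem_iUnion, mem_inter_iff, mem_singleton_iff]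
    exact ⟨fun h => ⟨g ω, rfl, h⟩, fun ⟨i, hi, h⟩ => by subst hi; exact h⟩
  rw [this]
  exact MeasurableSet.iUnion fun i => ((hg (measurableSet_singleton i)).inter (hv i hs))

/-- Castaing representation of a closed-valued measurable multifunction. -/
theorem exists_castaing [Nonempty X] (L : Ω → Set X)
    (hc : ∀ ω, IsClosed (L ω)) (hne : ∀ ω, (L ω).Nonempty)
    (hm : ∀ x : X, Measurable (fun ω => infDist x (L ω))) :
    ∃ σ : ℕ → Ω → X, (∀ n, Measurable (σ n)) ∧ (∀ n ω, σ n ω ∈ L ω) ∧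
      ∀ ω, ∀ z ∈ L ω, ∀ δ : ℝ, 0 < δ → ∃ n, dist (σ n ω) z < δ := by
  classical
  set e : ℕ → X := TopologicalSpace.denseSeq X with he_def
  have he : DenseRange e := TopologicalSpace.denseRange_denseSeq X
  -- basic approximation lemmas
  have approx : ∀ (ω : Ω) (c : X) (δ δ' : ℝ), 0 < δ' → infDist c (L ω) < δ →
      ∃ n, infDist (e n) (L ω) < δ' ∧ dist (e n) c < δ + δ' := by
    intro ω c δ δ' hδ' hδ
    obtain ⟨y, hy, hyd⟩ := (infDist_lt_iff (hne ω)).1 hδ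
    obtain ⟨z, ⟨n, rfl⟩, hz⟩ := Metric.mem_closure_iff.1 (he y) δ' hδ'
    refine ⟨n, lt_of_le_of_lt (infDist_le_dist_of_mem hy) (by rw [dist_comm]; exact hz), ?_⟩
    calc dist (e n) c ≤ dist (e n) y + dist y c := dist_triangle _ _ _
      _ < δ' + δ := add_lt_add (by rw [dist_comm]; exact hz) (by rw [dist_comm]; exact hyd)
      _ = δ + δ' := by ring
  have base : ∀ (ω : Ω) (δ : ℝ), 0 < δ → ∃ n, infDist (e n) (L ω) < δ := by
    intro ω δ hδ
    obtain ⟨y, hy⟩ := hne ω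
    obtain ⟨n, h1, _⟩ := approx ω y δ δ hδ (by rw [infDist_zero_of_mem hy]; exact hδ)
    exact ⟨n, h1⟩
  -- the recursive index sequence, for parameters p k
  have main : ∀ p k : ℕ, ∃ s : Ω → X, Measurable s ∧ (∀ ω, s ω ∈ L ω) ∧
      (∀ ω, infDist (e p) (L ω) < (1/2:ℝ)^k → dist (e p) (s ω) ≤ 3 * (1/2:ℝ)^k) := by
    intro p k
    set δ : ℕ → ℝ := fun j => (1/2:ℝ)^(k+j) with hδdef
    have hδpos : ∀ j, 0 < δ j := fun j => by positivity
    -- step function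
    set v : ℕ → ℕ → Ω → ℕ := fun j i ω =>
      sInf {n | infDist (e n) (L ω) < δ (j+1) ∧ dist (e n) (e i) < δ j + δ (j+1)} with hvdef
    have hvmeas : ∀ j i, Measurable (v j i) := by
      intro j i
      simp only [hvdef]
      apply measurable_sInf_nat
      intro n
      have : {ω | infDist (e n) (L ω) < δ (j+1) ∧ dist (e n) (e i) < δ j + δ (j+1)}
          = ((fun ω => infDist (e n) (L ω)) ⁻¹' Iio (δ (j+1))) ∩
            {ω | dist (e n) (e i) < δ j + δ (j+1)} := by ext ω; simp [mem_setOf_eq]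
      rw [this]
      refine ((hm (e n)) measurableSet_Iio).inter ?_
      by_cases hd : dist (e n) (e i) < δ j + δ (j+1)
      · simp only [hd]; simpa using MeasurableSet.univ
      · simp only [hd]; simpa using MeasurableSet.empty
    -- initial function
    set u0 : Ω → ℕ := fun ω =>
      if infDist (e p) (L ω) < δ 0 then p
      else sInf {n | infDist (e n) (L ω) < δ 0} with hu0def
    have hu0meas : Measurable u0 := by
      apply Measurable.ite ((hm (e p)) measurableSet_Iio) measurable_const
      apply measurable_sInf_nat
      intro n
      exact (hm (e n)) measurableSet_Iio
    have hu0 : ∀ ω, infDist (e (u0 ω)) (L ω) < δ 0 := by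
      intro ω
      by_cases h : infDist (e p) (L ω) < δ 0
      · simpa [hu0def, if_pos h] using h
      · have hex : {n | infDist (e n) (L ω) < δ 0}.Nonempty := base ω (δ 0) (hδpos 0)
        simpa [hu0def, if_neg h] using Nat.sInf_mem hex
    -- the recursion
    set u : ℕ → Ω → ℕ := fun j => Nat.rec u0 (fun j' prev ω => v j' (prev ω) ω) j with hudef
    have hu_succ : ∀ j ω, u (j+1) ω = v j (u j ω) ω := fun j ω => rfl
    have humeas : ∀ j, Measurable (u j) := by
      intro j
      induction j with
      | zero => exact hu0meas
      | succ j ih => exact measurable_nat_cases ih (hvmeas j)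
    have huinv : ∀ j ω, infDist (e (u j ω)) (L ω) < δ j ∧
        (∀ j', j = j' + 1 → dist (e (u j ω)) (e (u j' ω)) < δ j' + δ j) := by
      intro j
      induction j with
      | zero => exact fun ω => ⟨hu0 ω, fun j' h => by omega⟩
      | succ j ih =>
        intro ω
        have hex : {n | infDist (e n) (L ω) < δ (j+1) ∧
            dist (e n) (e (u j ω)) < δ j + δ (j+1)}.Nonempty :=
          approx ω (e (u j ω)) (δ j) (δ (j+1)) (hδpos (j+1)) (ih ω).1
        have hspec := Nat.sInf_mem hex
        rw [hu_succ]
        simp only [hvdef]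
        exact ⟨hspec.1, fun j' hj' => by
          have hj : j' = j := by omega
          subst hj; exact hspec.2⟩
    -- Cauchy
    have hgeom : ∀ ω j, dist (e (u j ω)) (e (u (j+1) ω)) ≤ (3 * (1/2:ℝ)^(k+1)) * (1/2)^j := by
      intro ω j
      have := ((huinv (j+1) ω).2 j rfl)
      rw [dist_comm] at this
      refine le_trans this.le (le_of_eq ?_)
      simp only [hδdef]
      rw [pow_add, pow_add, pow_succ, pow_succ]
      ring
    have hcauchy : ∀ ω, CauchySeq (fun j => e (u j ω)) := fun ω =>
      cauchySeq_of_le_geometric (1/2) (3 * (1/2:ℝ)^(k+1)) (by norm_num) (hgeom ω)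
    have hlim : ∀ ω, ∃ x, Tendsto (fun j => e (u j ω)) atTop (𝓝 x) := fun ω =>
      cauchySeq_tendsto_of_complete (hcauchy ω)
    refine ⟨fun ω => (hlim ω).choose, ?_, ?_, ?_⟩
    · apply measurable_of_tendsto_metrizable (f := fun j ω => e (u j ω))
      · exact fun j => measurable_from_nat.comp (humeas j)
      · exact tendsto_pi_nhds.2 fun ω => (hlim ω).choose_spec
    · intro ω
      have h1 : Tendsto (fun j => infDist (e (u j ω)) (L ω)) atTop
          (𝓝 (infDist (hlim ω).choose (L ω))) :=
        ((continuous_infDist_pt (L ω)).tendsto _).comp (hlim ω).choose_spec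
      have hδ0 : Tendsto δ atTop (𝓝 0) := by
        have := tendsto_pow_atTop_nhds_zero_of_lt_one (by norm_num : (0:ℝ) ≤ 1/2) (by norm_num)
        simpa [hδdef, pow_add] using this.const_mul ((1/2:ℝ)^k)
      have h2 : infDist (hlim ω).choose (L ω) ≤ 0 :=
        le_of_tendsto_of_tendsto h1 hδ0 (Eventually.of_forall fun j => (huinv j ω).1.le)
      exact ((hc ω).mem_iff_infDist_zero (hne ω)).2 (le_antisymm h2 infDist_nonneg)
    · intro ω hp
      have hc0 : infDist (e p) (L ω) < δ 0 := by simpa [hδdef] using hp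
      have h0 : u 0 ω = p := by
        show u0 ω = p
        simp only [hu0def]
        exact if_pos hc0
      have := dist_le_of_le_geometric_of_tendsto₀ (1/2) (3 * (1/2:ℝ)^(k+1)) (by norm_num)
        (hgeom ω) (hlim ω).choose_spec
      rw [h0] at this
      calc dist (e p) ((hlim ω).choose) ≤ (3 * (1/2:ℝ)^(k+1)) / (1 - 1/2) := this
        _ = 3 * (1/2:ℝ)^k := by rw [pow_succ]; ring
  -- assemble family over (p,k)
  choose s hsm hsmem hsd using fun q : ℕ × ℕ => main q.1 q.2
  refine ⟨fun n => s (Nat.unpair n), fun n => hsm _, fun n ω => hsmem _ ω, ?_⟩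
  intro ω z hz δ hδ
  obtain ⟨k, hk⟩ := exists_pow_lt_of_lt_one (show (0:ℝ) < δ/4 by linarith)
    (by norm_num : (1/2:ℝ) < 1)
  obtain ⟨w, ⟨p, rfl⟩, hp⟩ := Metric.mem_closure_iff.1 (he z) ((1/2)^k) (by positivity)
  have h1 : infDist (e p) (L ω) < (1/2)^k :=
    lt_of_le_of_lt (infDist_le_dist_of_mem hz) (by rw [dist_comm]; exact hp)
  have h2 := hsd (p, k) ω h1
  refine ⟨Nat.pair p k, ?_⟩
  show dist (s (Nat.unpair (Nat.pair p k)) ω) z < δ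
  rw [Nat.unpair_pair]
  calc dist (s (p,k) ω) z ≤ dist (s (p,k) ω) (e p) + dist (e p) z := dist_triangle _ _ _
    _ ≤ 3*(1/2)^k + (1/2)^k := add_le_add (by rw [dist_comm]; exact h2)
        (by rw [dist_comm]; exact hp.le)
    _ = 4*(1/2)^k := by ring
    _ < δ := by linarith

end Castaing

section Dynamics

variable {Ω₁ Ω₂ X : Type*} [MetricSpace X] [MeasurableSpace X] [MeasurableSpace Ω₂]

/-- Bundled hypotheses for the construction of the attractor. -/
structure Setup (θ₁ : ℝ → Ω₁ → Ω₁) (θ₂ : ℝ → Ω₂ → Ω₂)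
    (Φ : ℝ → Ω₁ → Ω₂ → X → X) (𝒟 : Set (Ω₁ → Ω₂ → Set X))
    (K : Ω₁ → Ω₂ → Set X) : Prop where
  hθ₁ : IsGroupAction θ₁
  hθ₂ : IsGroupAction θ₂
  hΦ : IsCocycle θ₁ θ₂ Φ
  hac : AsymptoticallyCompact θ₁ θ₂ Φ 𝒟
  hKmem : K ∈ 𝒟
  hKabs : ∀ (ω₁ : Ω₁) (ω₂ : Ω₂), ∀ B ∈ 𝒟, ∃ T : ℝ, 0 < T ∧ ∀ t : ℝ, T ≤ t →
    Φ t (θ₁ (-t) ω₁) (θ₂ (-t) ω₂) '' B (θ₁ (-t) ω₁) (θ₂ (-t) ω₂) ⊆ K ω₁ ω₂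
  hKcl : ∀ (ω₁ : Ω₁) (ω₂ : Ω₂), IsClosed (K ω₁ ω₂)
  hKne : ∀ (ω₁ : Ω₁) (ω₂ : Ω₂), (K ω₁ ω₂).Nonempty

variable {θ₁ : ℝ → Ω₁ → Ω₁} {θ₂ : ℝ → Ω₂ → Ω₂} {Φ : ℝ → Ω₁ → Ω₂ → X → X}
  {𝒟 : Set (Ω₁ → Ω₂ → Set X)} {K : Ω₁ → Ω₂ → Set X}

/-- The pullback image at time `t`. -/
def img (θ₁ : ℝ → Ω₁ → Ω₁) (θ₂ : ℝ → Ω₂ → Ω₂) (Φ : ℝ → Ω₁ → Ω₂ → X → X)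
    (B : Ω₁ → Ω₂ → Set X) (ω₁ : Ω₁) (ω₂ : Ω₂) (t : ℝ) : Set X :=
  Φ t (θ₁ (-t) ω₁) (θ₂ (-t) ω₂) '' B (θ₁ (-t) ω₁) (θ₂ (-t) ω₂)

lemma omegaLimit_eq (B : Ω₁ → Ω₂ → Set X) (ω₁ : Ω₁) (ω₂ : Ω₂) :
    omegaLimit θ₁ θ₂ Φ B ω₁ ω₂
      = ⋂ τ ∈ Ici (0:ℝ), closure (⋃ t ∈ Ici τ, img θ₁ θ₂ Φ B ω₁ ω₂ t) := rfl

lemma IsGroupAction.cancel {α : Type*} {θ : ℝ → α → α} (h : IsGroupAction θ)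
    (t : ℝ) (a : α) : θ t (θ (-t) a) = a := by
  rw [← h.2 (-t) t a, neg_add_cancel, h.1]

lemma IsGroupAction.cancel' {α : Type*} {θ : ℝ → α → α} (h : IsGroupAction θ)
    (t : ℝ) (a : α) : θ (-t) (θ t a) = a := by
  rw [← h.2 t (-t) a, add_neg_cancel, h.1]

lemma IsGroupAction.shift {α : Type*} {θ : ℝ → α → α} (h : IsGroupAction θ)
    {s t u : ℝ} (hstu : s + t = u) (a : α) : θ t (θ s a) = θ u a := by
  rw [← h.2 s t a, hstu]

/-- Decomposition via absorption: eventually the pullback image of any `B ∈ 𝒟`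
is inside the pullback image of `K` at a fixed time `r`. -/
lemma decompose (hS : Setup θ₁ θ₂ Φ 𝒟 K) (B : Ω₁ → Ω₂ → Set X) (hB : B ∈ 𝒟)
    (ω₁ : Ω₁) (ω₂ : Ω₂) {r : ℝ} (hr : 0 ≤ r) :
    ∃ T₀ : ℝ, ∀ t : ℝ, T₀ ≤ t → img θ₁ θ₂ Φ B ω₁ ω₂ t ⊆ img θ₁ θ₂ Φ K ω₁ ω₂ r := by
  obtain ⟨T', hT'pos, hT'⟩ := hS.hKabs (θ₁ (-r) ω₁) (θ₂ (-r) ω₂) B hB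
  refine ⟨r + T', fun t ht => ?_⟩
  rintro - ⟨x, hx, rfl⟩
  set s := t - r with hs_def
  have hs : T' ≤ s := by simp only [hs_def]; linarith
  have hs0 : 0 ≤ s := le_trans hT'pos.le hs
  have e1 : θ₁ (-t) ω₁ = θ₁ (-s) (θ₁ (-r) ω₁) :=
    (hS.hθ₁.shift (by ring) ω₁).symm
  have e2 : θ₂ (-t) ω₂ = θ₂ (-s) (θ₂ (-r) ω₂) :=
    (hS.hθ₂.shift (by ring) ω₂).symm
  have hmem : Φ s (θ₁ (-t) ω₁) (θ₂ (-t) ω₂) x ∈ K (θ₁ (-r) ω₁) (θ₂ (-r) ω₂) := by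
    refine hT' s hs ⟨x, ?_, ?_⟩
    · rw [← e1, ← e2]; exact hx
    · rw [← e1, ← e2]
  have hco := hS.hΦ.cocycle r s hr hs0 (θ₁ (-t) ω₁) (θ₂ (-t) ω₂) x
  have e3 : θ₁ s (θ₁ (-t) ω₁) = θ₁ (-r) ω₁ := hS.hθ₁.shift (by ring) ω₁
  have e4 : θ₂ s (θ₂ (-t) ω₂) = θ₂ (-r) ω₂ := hS.hθ₂.shift (by ring) ω₂
  have e5 : r + s = t := by ring
  rw [e5, e3, e4] at hco
  exact ⟨_, hmem, hco.symm⟩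

/-- Limits of pullback trajectories starting in `B ∈ 𝒟` belong to the
Ω-limit set of `K`. -/
lemma limit_mem_omega (hS : Setup θ₁ θ₂ Φ 𝒟 K) (B : Ω₁ → Ω₂ → Set X) (hB : B ∈ 𝒟)
    (ω₁ : Ω₁) (ω₂ : Ω₂) (t : ℕ → ℝ) (x : ℕ → X) (ht : Tendsto t atTop atTop)
    (hx : ∀ n, x n ∈ B (θ₁ (-t n) ω₁) (θ₂ (-t n) ω₂)) {y : X}
    (hy : Tendsto (fun n => Φ (t n) (θ₁ (-t n) ω₁) (θ₂ (-t n) ω₂) (x n)) atTop (𝓝 y)) :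
    y ∈ omegaLimit θ₁ θ₂ Φ K ω₁ ω₂ := by
  rw [omegaLimit_eq]
  simp only [mem_iInter, mem_Ici]
  intro τ hτ
  obtain ⟨T₀, hT₀⟩ := decompose hS B hB ω₁ ω₂ hτ
  apply mem_closure_of_tendsto hy
  filter_upwards [ht.eventually_ge_atTop T₀] with n hn
  exact mem_biUnion (self_mem_Ici) (hT₀ (t n) hn ⟨x n, hx n, rfl⟩)

/-- Approximation of points of the Ω-limit set. -/
lemma omega_approx (ω₁ : Ω₁) (ω₂ : Ω₂) {y : X}
    (hy : y ∈ omegaLimit θ₁ θ₂ Φ K ω₁ ω₂) :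
    ∃ (t : ℕ → ℝ) (x : ℕ → X), (∀ n : ℕ, (n:ℝ) ≤ t n) ∧ Tendsto t atTop atTop ∧
      (∀ n, x n ∈ K (θ₁ (-t n) ω₁) (θ₂ (-t n) ω₂)) ∧
      Tendsto (fun n => Φ (t n) (θ₁ (-t n) ω₁) (θ₂ (-t n) ω₂) (x n)) atTop (𝓝 y) := by
  rw [omegaLimit_eq] at hy
  simp only [mem_iInter, mem_Ici] at hy
  have H : ∀ n : ℕ, ∃ (t : ℝ) (x : X), (n:ℝ) ≤ t ∧
      x ∈ K (θ₁ (-t) ω₁) (θ₂ (-t) ω₂) ∧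
      dist y (Φ t (θ₁ (-t) ω₁) (θ₂ (-t) ω₂) x) < 1/(n+1) := by
    intro n
    have h1 := hy (n:ℝ) (n.cast_nonneg)
    obtain ⟨z, hz, hd⟩ := Metric.mem_closure_iff.1 h1 (1/(n+1)) (by positivity)
    simp only [mem_iUnion, mem_Ici] at hz
    obtain ⟨t, ht, x, hx, rfl⟩ := hz
    exact ⟨t, x, ht, hx, hd⟩
  choose t x h1 h2 h3 using H
  have ht : Tendsto t atTop atTop := tendsto_atTop_mono h1 tendsto_natCast_atTop_atTop
  refine ⟨t, x, h1, ht, h2, ?_⟩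
  rw [tendsto_iff_dist_tendsto_zero]
  have hb : ∀ n : ℕ, dist (Φ (t n) (θ₁ (-t n) ω₁) (θ₂ (-t n) ω₂) (x n)) y ≤ 1/((n:ℝ)+1) := by
    intro n; rw [dist_comm]; exact (h3 n).le
  apply squeeze_zero (fun n => dist_nonneg) hb
  exact tendsto_one_div_add_atTop_nhds_zero_nat

lemma omega_nonempty (hS : Setup θ₁ θ₂ Φ 𝒟 K) (ω₁ : Ω₁) (ω₂ : Ω₂) :
    (omegaLimit θ₁ θ₂ Φ K ω₁ ω₂).Nonempty := by
  set x : ℕ → X := fun n => (hS.hKne (θ₁ (-(n:ℝ)) ω₁) (θ₂ (-(n:ℝ)) ω₂)).some with hx_def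
  have hx : ∀ n : ℕ, x n ∈ K (θ₁ (-((n:ℕ):ℝ)) ω₁) (θ₂ (-((n:ℕ):ℝ)) ω₂) :=
    fun n => (hS.hKne _ _).some_mem
  obtain ⟨φ, y, hφ, hy⟩ := hS.hac ω₁ ω₂ K hS.hKmem (fun n => (n:ℝ)) x
    tendsto_natCast_atTop_atTop hx
  refine ⟨y, limit_mem_omega hS K hS.hKmem ω₁ ω₂ (fun n => ((φ n : ℕ):ℝ)) (fun n => x (φ n))
    (tendsto_natCast_atTop_atTop.comp hφ.tendsto_atTop) (fun n => hx (φ n)) hy⟩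

lemma omega_subset_K (hS : Setup θ₁ θ₂ Φ 𝒟 K) (ω₁ : Ω₁) (ω₂ : Ω₂) :
    omegaLimit θ₁ θ₂ Φ K ω₁ ω₂ ⊆ K ω₁ ω₂ := by
  obtain ⟨T', hT'pos, hT'⟩ := hS.hKabs ω₁ ω₂ K hS.hKmem
  intro y hy
  rw [omegaLimit_eq] at hy
  simp only [mem_iInter, mem_Ici] at hy
  have h1 := hy (max T' 0) (le_max_right _ _)
  have sub : (⋃ t ∈ Ici (max T' 0), img θ₁ θ₂ Φ K ω₁ ω₂ t) ⊆ K ω₁ ω₂ := by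
    rintro z hz
    simp only [mem_iUnion, mem_Ici] at hz
    obtain ⟨t, ht, hmem⟩ := hz
    exact hT' t (le_trans (le_max_left _ _) ht) hmem
  have := (closure_mono sub).trans (le_of_eq (hS.hKcl ω₁ ω₂).closure_eq)
  exact this h1

lemma omega_isClosed (ω₁ : Ω₁) (ω₂ : Ω₂) :
    IsClosed (omegaLimit θ₁ θ₂ Φ K ω₁ ω₂) := by
  rw [omegaLimit_eq]
  exact isClosed_biInter fun τ _ => isClosed_closure

lemma omega_isCompact (hS : Setup θ₁ θ₂ Φ 𝒟 K) (ω₁ : Ω₁) (ω₂ : Ω₂) :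
    IsCompact (omegaLimit θ₁ θ₂ Φ K ω₁ ω₂) := by
  apply IsSeqCompact.isCompact
  intro y hy
  have H : ∀ n : ℕ, ∃ (t : ℝ) (x : X), (n:ℝ) ≤ t ∧
      x ∈ K (θ₁ (-t) ω₁) (θ₂ (-t) ω₂) ∧
      dist (y n) (Φ t (θ₁ (-t) ω₁) (θ₂ (-t) ω₂) x) < 1/(n+1) := by
    intro n
    have h1 := hy n
    rw [omegaLimit_eq] at h1
    simp only [mem_iInter, mem_Ici] at h1
    obtain ⟨z, hz, hd⟩ := Metric.mem_closure_iff.1 (h1 (n:ℝ) n.cast_nonneg)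
      (1/(n+1)) (by positivity)
    simp only [mem_iUnion, mem_Ici] at hz
    obtain ⟨t, ht, x, hx, rfl⟩ := hz
    exact ⟨t, x, ht, hx, hd⟩
  choose t x h1 h2 h3 using H
  have ht : Tendsto t atTop atTop := tendsto_atTop_mono h1 tendsto_natCast_atTop_atTop
  obtain ⟨φ, z, hφ, hz⟩ := hS.hac ω₁ ω₂ K hS.hKmem t x ht h2
  have hzA : z ∈ omegaLimit θ₁ θ₂ Φ K ω₁ ω₂ :=
    limit_mem_omega hS K hS.hKmem ω₁ ω₂ (fun n => t (φ n)) (fun n => x (φ n))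
      (ht.comp hφ.tendsto_atTop) (fun n => h2 (φ n)) hz
  refine ⟨z, hzA, φ, hφ, ?_⟩
  rw [tendsto_iff_dist_tendsto_zero]
  have hb : ∀ n, dist (y (φ n)) z ≤ 1/(n+1)
      + dist (Φ (t (φ n)) (θ₁ (-t (φ n)) ω₁) (θ₂ (-t (φ n)) ω₂) (x (φ n))) z := by
    intro n
    refine le_trans (dist_triangle _ _ _) (add_le_add ?_ le_rfl)
    refine le_trans (h3 (φ n)).le ?_
    have hle : n ≤ φ n := hφ.le_apply
    have : (n:ℝ) + 1 ≤ (φ n : ℝ) + 1 := by exact_mod_cast by omega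
    exact one_div_le_one_div_of_le (by positivity) this
  apply squeeze_zero (fun n => dist_nonneg) hb
  have l1 : Tendsto (fun n : ℕ => 1/((n:ℝ)+1)) atTop (𝓝 0) :=
    tendsto_one_div_add_atTop_nhds_zero_nat
  have l2 : Tendsto (fun n =>
      dist (Φ (t (φ n)) (θ₁ (-t (φ n)) ω₁) (θ₂ (-t (φ n)) ω₂) (x (φ n))) z) atTop (𝓝 0) :=
    tendsto_iff_dist_tendsto_zero.1 hz
  simpa using l1.add l2

lemma omega_invariant (hS : Setup θ₁ θ₂ Φ 𝒟 K) :
    Invariant θ₁ θ₂ Φ (fun ω₁ ω₂ => omegaLimit θ₁ θ₂ Φ K ω₁ ω₂) := by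
  intro τ hτ ω₁ ω₂
  apply Set.Subset.antisymm
  · rintro - ⟨y, hy, rfl⟩
    obtain ⟨t, x, h1, ht, h2, h3⟩ := omega_approx ω₁ ω₂ hy
    have ht0 : ∀ n, (0:ℝ) ≤ t n := fun n => le_trans (n.cast_nonneg) (h1 n)
    have hc : Tendsto (fun n => Φ τ ω₁ ω₂ (Φ (t n) (θ₁ (-t n) ω₁) (θ₂ (-t n) ω₂) (x n)))
        atTop (𝓝 (Φ τ ω₁ ω₂ y)) :=
      ((hS.hΦ.continuous τ hτ ω₁ ω₂).tendsto y).comp h3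
    have key : ∀ n, Φ τ ω₁ ω₂ (Φ (t n) (θ₁ (-t n) ω₁) (θ₂ (-t n) ω₂) (x n))
        = Φ (τ + t n) (θ₁ (-(τ + t n)) (θ₁ τ ω₁)) (θ₂ (-(τ + t n)) (θ₂ τ ω₂)) (x n) := by
      intro n
      have hco := hS.hΦ.cocycle τ (t n) hτ (ht0 n) (θ₁ (-t n) ω₁) (θ₂ (-t n) ω₂) (x n)
      rw [hS.hθ₁.cancel (t n) ω₁, hS.hθ₂.cancel (t n) ω₂] at hco
      rw [← hco]
      congr 1
      · exact (hS.hθ₁.shift (by ring) ω₁).symm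
      · exact (hS.hθ₂.shift (by ring) ω₂).symm
    have hmem : ∀ n, x n ∈ K (θ₁ (-(τ + t n)) (θ₁ τ ω₁)) (θ₂ (-(τ + t n)) (θ₂ τ ω₂)) := by
      intro n
      rw [hS.hθ₁.shift (by ring : τ + (-(τ + t n)) = -t n) ω₁,
        hS.hθ₂.shift (by ring : τ + (-(τ + t n)) = -t n) ω₂]
      exact h2 n
    exact limit_mem_omega hS K hS.hKmem (θ₁ τ ω₁) (θ₂ τ ω₂) (fun n => τ + t n) x
      (tendsto_atTop_add_const_left atTop τ ht) hmem (hc.congr key)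
  · intro y hy
    obtain ⟨t, x, h1, ht, h2, h3⟩ := omega_approx (θ₁ τ ω₁) (θ₂ τ ω₂) hy
    set N₀ : ℕ := ⌈τ⌉₊ with hN₀
    have hτN : τ ≤ (N₀:ℝ) := Nat.le_ceil τ
    set s : ℕ → ℝ := fun n => t (n + N₀) - τ with hs_def
    have hsn : ∀ n : ℕ, (n:ℝ) ≤ s n := by
      intro n
      have h' : ((n + N₀ : ℕ):ℝ) ≤ t (n + N₀) := h1 (n + N₀)
      simp only [hs_def]
      push_cast at h' ⊢
      linarith
    have hs0 : ∀ n : ℕ, 0 ≤ s n := fun n => le_trans n.cast_nonneg (hsn n)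
    have hst : Tendsto s atTop atTop := tendsto_atTop_mono hsn tendsto_natCast_atTop_atTop
    have ebase₁ : ∀ n, θ₁ (-t (n + N₀)) (θ₁ τ ω₁) = θ₁ (-(s n)) ω₁ := by
      intro n; exact hS.hθ₁.shift (by simp only [hs_def]; ring) ω₁
    have ebase₂ : ∀ n, θ₂ (-t (n + N₀)) (θ₂ τ ω₂) = θ₂ (-(s n)) ω₂ := by
      intro n; exact hS.hθ₂.shift (by simp only [hs_def]; ring) ω₂
    have hmem : ∀ n, x (n + N₀) ∈ K (θ₁ (-(s n)) ω₁) (θ₂ (-(s n)) ω₂) := by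
      intro n
      rw [← ebase₁ n, ← ebase₂ n]
      exact h2 (n + N₀)
    obtain ⟨φ, w, hφ, hw⟩ := hS.hac ω₁ ω₂ K hS.hKmem s (fun n => x (n + N₀)) hst hmem
    have hwA : w ∈ omegaLimit θ₁ θ₂ Φ K ω₁ ω₂ :=
      limit_mem_omega hS K hS.hKmem ω₁ ω₂ (fun n => s (φ n)) (fun n => x (φ n + N₀))
        (hst.comp hφ.tendsto_atTop) (fun n => hmem (φ n)) hw
    have hc : Tendsto (fun n => Φ τ ω₁ ω₂
        (Φ (s (φ n)) (θ₁ (-(s (φ n))) ω₁) (θ₂ (-(s (φ n))) ω₂) (x (φ n + N₀))))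
        atTop (𝓝 (Φ τ ω₁ ω₂ w)) :=
      ((hS.hΦ.continuous τ hτ ω₁ ω₂).tendsto w).comp hw
    have key : ∀ n, Φ τ ω₁ ω₂
        (Φ (s (φ n)) (θ₁ (-(s (φ n))) ω₁) (θ₂ (-(s (φ n))) ω₂) (x (φ n + N₀)))
        = Φ (t (φ n + N₀)) (θ₁ (-t (φ n + N₀)) (θ₁ τ ω₁)) (θ₂ (-t (φ n + N₀)) (θ₂ τ ω₂))
            (x (φ n + N₀)) := by
      intro n
      have hco := hS.hΦ.cocycle τ (s (φ n)) hτ (hs0 (φ n)) (θ₁ (-(s (φ n))) ω₁)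
        (θ₂ (-(s (φ n))) ω₂) (x (φ n + N₀))
      rw [hS.hθ₁.cancel (s (φ n)) ω₁, hS.hθ₂.cancel (s (φ n)) ω₂] at hco
      rw [← hco, ebase₁ (φ n), ebase₂ (φ n)]
      congr 1
      simp only [hs_def]; ring
    have hsub : Tendsto (fun n => Φ (t (φ n + N₀)) (θ₁ (-t (φ n + N₀)) (θ₁ τ ω₁))
        (θ₂ (-t (φ n + N₀)) (θ₂ τ ω₂)) (x (φ n + N₀))) atTop (𝓝 y) := by
      refine h3.comp (tendsto_atTop_mono (fun n => ?_) tendsto_id)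
      exact le_trans hφ.le_apply (Nat.le_add_right _ _)
    have : Φ τ ω₁ ω₂ w = y := tendsto_nhds_unique (hc.congr key) hsub
    exact ⟨w, hwA, this⟩

lemma omega_mem (hS : Setup θ₁ θ₂ Φ 𝒟 K) (hnc : NeighborhoodClosed 𝒟) :
    (fun ω₁ ω₂ => omegaLimit θ₁ θ₂ Φ K ω₁ ω₂) ∈ 𝒟 := by
  obtain ⟨ε, hε, h⟩ := hnc K hS.hKmem
  exact h _ fun ω₁ ω₂ => ⟨omega_nonempty hS ω₁ ω₂,
    (omega_subset_K hS ω₁ ω₂).trans (Metric.self_subset_thickening hε _)⟩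

lemma omega_attracts (hS : Setup θ₁ θ₂ Φ 𝒟 K) (B : Ω₁ → Ω₂ → Set X) (hB : B ∈ 𝒟) :
    Attracts θ₁ θ₂ Φ B (fun ω₁ ω₂ => omegaLimit θ₁ θ₂ Φ K ω₁ ω₂) := by
  intro ω₁ ω₂
  by_contra hcon
  rw [ENNReal.tendsto_nhds_zero] at hcon
  push_neg at hcon
  obtain ⟨ε, hε, hfr⟩ := hcon
  have H : ∀ n : ℕ, ∃ t : ℝ, (n:ℝ) ≤ t ∧ ε < hausSemidist
      (Φ t (θ₁ (-t) ω₁) (θ₂ (-t) ω₂) '' B (θ₁ (-t) ω₁) (θ₂ (-t) ω₂))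
      (omegaLimit θ₁ θ₂ Φ K ω₁ ω₂) := by
    intro n
    obtain ⟨t, ht, hlt⟩ := frequently_atTop.1 hfr (n:ℝ)
    exact ⟨t, ht, hlt⟩
  choose t ht hlt using H
  have H2 : ∀ n : ℕ, ∃ x ∈ B (θ₁ (-t n) ω₁) (θ₂ (-t n) ω₂),
      ε < EMetric.infEdist (Φ (t n) (θ₁ (-t n) ω₁) (θ₂ (-t n) ω₂) x)
        (omegaLimit θ₁ θ₂ Φ K ω₁ ω₂) := by
    intro n
    have h := hlt n
    simp only [hausSemidist, lt_iSup_iff] at h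
    obtain ⟨z, hz, hlt'⟩ := h
    obtain ⟨x, hx, rfl⟩ := hz
    exact ⟨x, hx, hlt'⟩
  choose x hx hlt2 using H2
  have htt : Tendsto t atTop atTop := tendsto_atTop_mono ht tendsto_natCast_atTop_atTop
  obtain ⟨φ, y, hφ, hy⟩ := hS.hac ω₁ ω₂ B hB t x htt hx
  have hyA : y ∈ omegaLimit θ₁ θ₂ Φ K ω₁ ω₂ :=
    limit_mem_omega hS B hB ω₁ ω₂ (fun n => t (φ n)) (fun n => x (φ n))
      (htt.comp hφ.tendsto_atTop) (fun n => hx (φ n)) hy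
  have h0 : EMetric.infEdist y (omegaLimit θ₁ θ₂ Φ K ω₁ ω₂) = 0 :=
    EMetric.infEdist_zero_of_mem hyA
  have hcont : Tendsto (fun n => EMetric.infEdist
      (Φ (t (φ n)) (θ₁ (-t (φ n)) ω₁) (θ₂ (-t (φ n)) ω₂) (x (φ n)))
      (omegaLimit θ₁ θ₂ Φ K ω₁ ω₂)) atTop
      (𝓝 (EMetric.infEdist y (omegaLimit θ₁ θ₂ Φ K ω₁ ω₂))) :=
    (EMetric.continuous_infEdist.tendsto y).comp hy
  have hle : ε ≤ EMetric.infEdist y (omegaLimit θ₁ θ₂ Φ K ω₁ ω₂) :=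
    ge_of_tendsto hcont (Eventually.of_forall fun n => (hlt2 (φ n)).le)
  rw [h0] at hle
  exact absurd (lt_of_lt_of_le hε hle) (lt_irrefl _)

lemma omega_subset_img (hS : Setup θ₁ θ₂ Φ 𝒟 K) (ω₁ : Ω₁) (ω₂ : Ω₂) {r : ℝ} (hr : 0 ≤ r) :
    omegaLimit θ₁ θ₂ Φ K ω₁ ω₂ ⊆ img θ₁ θ₂ Φ K ω₁ ω₂ r := by
  have hinv := omega_invariant hS r hr (θ₁ (-r) ω₁) (θ₂ (-r) ω₂)
  simp only [hS.hθ₁.cancel r ω₁, hS.hθ₂.cancel r ω₂] at hinv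
  intro z hz
  rw [← hinv] at hz
  obtain ⟨w, hw, rfl⟩ := hz
  exact ⟨w, omega_subset_K hS _ _ hw, rfl⟩

lemma omega_infDist_tendsto (hS : Setup θ₁ θ₂ Φ 𝒟 K) (ω₁ : Ω₁) (ω₂ : Ω₂) (x : X) :
    Tendsto (fun m : ℕ => infDist x (img θ₁ θ₂ Φ K ω₁ ω₂ (m:ℝ))) atTop
      (𝓝 (infDist x (omegaLimit θ₁ θ₂ Φ K ω₁ ω₂))) := by
  have hAne := omega_nonempty hS ω₁ ω₂
  set L : ℝ := infDist x (omegaLimit θ₁ θ₂ Φ K ω₁ ω₂) with hLdef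
  have hub : ∀ m : ℕ, infDist x (img θ₁ θ₂ Φ K ω₁ ω₂ (m:ℝ)) ≤ L := fun m =>
    infDist_le_infDist_of_subset (omega_subset_img hS ω₁ ω₂ (m.cast_nonneg)) hAne
  rw [Metric.tendsto_atTop]
  by_contra hcon
  push_neg at hcon
  obtain ⟨ε, hε, hcon⟩ := hcon
  choose m hm hd using hcon
  have hflt : ∀ k : ℕ, infDist x (img θ₁ θ₂ Φ K ω₁ ω₂ (m k : ℝ)) < L - ε/2 := by
    intro k
    have h1 := hub (m k)
    have h2 := hd k
    rw [Real.dist_eq, abs_of_nonpos (by linarith)] at h2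
    linarith
  have hne : ∀ k : ℕ, (img θ₁ θ₂ Φ K ω₁ ω₂ ((m k : ℕ):ℝ)).Nonempty :=
    fun k => (hS.hKne _ _).image _
  have H3 : ∀ k : ℕ, ∃ ξ ∈ K (θ₁ (-((m k:ℕ):ℝ)) ω₁) (θ₂ (-((m k:ℕ):ℝ)) ω₂),
      dist x (Φ ((m k:ℕ):ℝ) (θ₁ (-((m k:ℕ):ℝ)) ω₁) (θ₂ (-((m k:ℕ):ℝ)) ω₂) ξ) < L - ε/2 := by
    intro k
    obtain ⟨z, hzmem, hdz⟩ := (infDist_lt_iff (hne k)).1 (hflt k)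
    obtain ⟨ξ, hξ, rfl⟩ := hzmem
    exact ⟨ξ, hξ, hdz⟩
  choose ξ hξ hdz using H3
  have htm : Tendsto (fun k => ((m k : ℕ):ℝ)) atTop atTop :=
    tendsto_natCast_atTop_atTop.comp (tendsto_atTop_mono hm tendsto_id)
  obtain ⟨φ, w, hφ, hw⟩ := hS.hac ω₁ ω₂ K hS.hKmem (fun k => ((m k:ℕ):ℝ)) ξ htm hξ
  have hwA : w ∈ omegaLimit θ₁ θ₂ Φ K ω₁ ω₂ :=
    limit_mem_omega hS K hS.hKmem ω₁ ω₂ (fun n => ((m (φ n):ℕ):ℝ)) (fun n => ξ (φ n))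
      (htm.comp hφ.tendsto_atTop) (fun n => hξ (φ n)) hw
  have hdw : dist x w ≤ L - ε/2 := by
    have hc := (tendsto_const_nhds (x := x) (f := atTop (α := ℕ))).dist hw
    exact le_of_tendsto hc (Eventually.of_forall fun k => (hdz (φ k)).le)
  have : L ≤ dist x w := infDist_le_dist_of_mem hwA
  linarith

/-- Uniqueness of pullback attractors. -/
lemma attractor_unique {P : Measure Ω₂} (hθ₁ : IsGroupAction θ₁) (hθ₂ : IsGroupAction θ₂)
    {A1 A2 : Ω₁ → Ω₂ → Set X} (h1 : IsPullbackAttractor θ₁ θ₂ Φ P 𝒟 A1)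
    (h2 : IsPullbackAttractor θ₁ θ₂ Φ P 𝒟 A2) : A1 = A2 := by
  have main : ∀ (B C : Ω₁ → Ω₂ → Set X), IsPullbackAttractor θ₁ θ₂ Φ P 𝒟 B →
      IsPullbackAttractor θ₁ θ₂ Φ P 𝒟 C → ∀ (ω₁ : Ω₁) (ω₂ : Ω₂), B ω₁ ω₂ ⊆ C ω₁ ω₂ := by
    intro B C hB hC ω₁ ω₂
    have hatt := hC.attracts B hB.mem ω₁ ω₂
    have heq : ∀ t : ℝ, 0 ≤ t →
        Φ t (θ₁ (-t) ω₁) (θ₂ (-t) ω₂) '' B (θ₁ (-t) ω₁) (θ₂ (-t) ω₂) = B ω₁ ω₂ := by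
      intro t htt
      have h := hB.invariant t htt (θ₁ (-t) ω₁) (θ₂ (-t) ω₂)
      rwa [hθ₁.cancel t ω₁, hθ₂.cancel t ω₂] at h
    have hev : (fun t : ℝ => hausSemidist
        (Φ t (θ₁ (-t) ω₁) (θ₂ (-t) ω₂) '' B (θ₁ (-t) ω₁) (θ₂ (-t) ω₂)) (C ω₁ ω₂))
        =ᶠ[atTop] (fun _ : ℝ => hausSemidist (B ω₁ ω₂) (C ω₁ ω₂)) := by
      filter_upwards [eventually_ge_atTop (0:ℝ)] with t htt
      rw [heq t htt]
    have hzero : hausSemidist (B ω₁ ω₂) (C ω₁ ω₂) = 0 :=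
      tendsto_nhds_unique tendsto_const_nhds (Tendsto.congr' hev hatt)
    intro z hz
    have hz0 : EMetric.infEdist z (C ω₁ ω₂) = 0 := by
      rw [hausSemidist] at hzero
      simp only [ENNReal.iSup_eq_zero] at hzero
      exact hzero z hz
    have hcl : z ∈ closure (C ω₁ ω₂) := EMetric.mem_closure_iff_infEdist_zero.2 hz0
    rwa [(hC.compact ω₁ ω₂).isClosed.closure_eq] at hcl
  funext ω₁ ω₂
  exact Subset.antisymm (main A1 A2 h1 h2 ω₁ ω₂) (main A2 A1 h2 h1 ω₁ ω₂)

section Meas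

variable [BorelSpace X] [CompleteSpace X] [SecondCountableTopology X]
  (P : Measure Ω₂) [IsProbabilityMeasure P]

lemma img_nullMeasurable (hS : Setup θ₁ θ₂ Φ 𝒟 K)
    (hθ₂meas : Measurable fun p : ℝ × Ω₂ => θ₂ p.1 p.2)
    (hθ₂pres : ∀ t : ℝ, MeasurePreserving (θ₂ t) P P)
    (hKm : ∀ (ω₁ : Ω₁) (x : X), NullMeasurable (fun ω₂ => Metric.infDist x (K ω₁ ω₂)) P)
    (ω₁ : Ω₁) (m : ℕ) (x : X) :
    NullMeasurable (fun ω₂ => infDist x (img θ₁ θ₂ Φ K ω₁ ω₂ (m:ℝ))) P := by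
  have hΩ₂ : Nonempty Ω₂ := by
    by_contra h
    rw [not_nonempty_iff] at h
    have h1 : P univ = 1 := measure_univ
    rw [Set.univ_eq_empty_iff.2 h, measure_empty] at h1
    exact zero_ne_one h1
  obtain ⟨ω₂0⟩ := hΩ₂
  have hX : Nonempty X := ⟨(hS.hKne ω₁ ω₂0).some⟩
  set ω₁' := θ₁ (-(m:ℝ)) ω₁ with hω₁'
  obtain ⟨σ, hσm, hσmem, hσd⟩ := exists_castaing (Ω := NullMeasurableSpace Ω₂ P)
    (fun ω₂ => K ω₁' ω₂) (fun ω₂ => hS.hKcl ω₁' ω₂) (fun ω₂ => hS.hKne ω₁' ω₂)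
    (fun z => (hKm ω₁' z).measurable')
  have hFmeas : Measurable (fun p : Ω₂ × X => Φ (m:ℝ) ω₁' p.1 p.2) := by
    have h := hS.hΦ.measurable ω₁'
    exact h.comp ((measurable_const
      (a := (⟨(m:ℝ), m.cast_nonneg⟩ : {t : ℝ // 0 ≤ t}))).prodMk measurable_id)
  have hθm : @Measurable (NullMeasurableSpace Ω₂ P) Ω₂ _ _ (θ₂ (-(m:ℝ))) := by
    have h : Measurable (θ₂ (-(m:ℝ))) := hθ₂meas.comp (measurable_const.prodMk measurable_id)
    exact h.nullMeasurable.measurable'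
  have hθm' : @Measurable (NullMeasurableSpace Ω₂ P) (NullMeasurableSpace Ω₂ P) _ _
      (θ₂ (-(m:ℝ))) := by
    intro s hs
    exact NullMeasurableSet.preimage hs (hθ₂pres (-(m:ℝ))).quasiMeasurePreserving
  set g : ℕ → Ω₂ → X := fun n ω₂ => Φ (m:ℝ) ω₁' (θ₂ (-(m:ℝ)) ω₂) (σ n (θ₂ (-(m:ℝ)) ω₂))
    with hgdef
  have hgm : ∀ n, @Measurable (NullMeasurableSpace Ω₂ P) X _ _ (g n) := fun n =>
    hFmeas.comp (hθm.prodMk ((hσm n).comp hθm'))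
  have key : ∀ ω₂, infDist x (img θ₁ θ₂ Φ K ω₁ ω₂ (m:ℝ))
      = infDist x (range (fun n => g n ω₂)) := by
    intro ω₂
    have hsub1 : range (fun n => g n ω₂) ⊆ img θ₁ θ₂ Φ K ω₁ ω₂ (m:ℝ) := by
      rintro - ⟨n, rfl⟩
      exact ⟨σ n (θ₂ (-(m:ℝ)) ω₂), hσmem n _, rfl⟩
    have hsub2 : img θ₁ θ₂ Φ K ω₁ ω₂ (m:ℝ) ⊆ closure (range (fun n => g n ω₂)) := by
      rintro - ⟨z, hz, rfl⟩
      have hdense : z ∈ closure (range fun n => σ n (θ₂ (-(m:ℝ)) ω₂)) := by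
        rw [Metric.mem_closure_iff]
        intro δ hδ
        obtain ⟨n, hn⟩ := hσd (θ₂ (-(m:ℝ)) ω₂) z hz δ hδ
        exact ⟨σ n _, ⟨n, rfl⟩, by rw [dist_comm]; exact hn⟩
      have hcont := hS.hΦ.continuous (m:ℝ) m.cast_nonneg ω₁' (θ₂ (-(m:ℝ)) ω₂)
      have himg := image_closure_subset_closure_image
        (f := fun z => Φ (m:ℝ) ω₁' (θ₂ (-(m:ℝ)) ω₂) z)
        (s := range fun n => σ n (θ₂ (-(m:ℝ)) ω₂)) hcont
      have hmem := himg ⟨z, hdense, rfl⟩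
      refine closure_mono ?_ hmem
      rintro - ⟨-, ⟨n, rfl⟩, rfl⟩
      exact ⟨n, rfl⟩
    apply le_antisymm
    · exact infDist_le_infDist_of_subset hsub1 ⟨g 0 ω₂, 0, rfl⟩
    · calc infDist x (range fun n => g n ω₂)
          = infDist x (closure (range fun n => g n ω₂)) := infDist_closure.symm
        _ ≤ infDist x (img θ₁ θ₂ Φ K ω₁ ω₂ (m:ℝ)) :=
            infDist_le_infDist_of_subset hsub2 ((hS.hKne _ _).image _)
  have keyr : ∀ ω₂, infDist x (range (fun n => g n ω₂))
      = (⨅ n, edist x (g n ω₂)).toReal := by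
    intro ω₂
    show (EMetric.infEdist x (range fun n => g n ω₂)).toReal = _
    congr 1
    rw [EMetric.infEdist]
    exact iInf_range
  have heq : (fun ω₂ => infDist x (img θ₁ θ₂ Φ K ω₁ ω₂ (m:ℝ)))
      = fun ω₂ => (⨅ n, edist x (g n ω₂)).toReal :=
    funext fun ω₂ => (key ω₂).trans (keyr ω₂)
  rw [heq]
  exact (Measurable.ennreal_toReal
    (Measurable.iInf fun n => Measurable.edist measurable_const (hgm n)))

lemma omega_nullMeasurable (hS : Setup θ₁ θ₂ Φ 𝒟 K)
    (hθ₂meas : Measurable fun p : ℝ × Ω₂ => θ₂ p.1 p.2)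
    (hθ₂pres : ∀ t : ℝ, MeasurePreserving (θ₂ t) P P)
    (hKm : ∀ (ω₁ : Ω₁) (x : X), NullMeasurable (fun ω₂ => Metric.infDist x (K ω₁ ω₂)) P)
    (ω₁ : Ω₁) (x : X) :
    NullMeasurable (fun ω₂ => infDist x (omegaLimit θ₁ θ₂ Φ K ω₁ ω₂)) P := by
  have hm : ∀ m : ℕ, @Measurable (NullMeasurableSpace Ω₂ P) ℝ _ _
      (fun ω₂ => infDist x (img θ₁ θ₂ Φ K ω₁ ω₂ (m:ℝ))) :=
    fun m => (img_nullMeasurable P hS hθ₂meas hθ₂pres hKm ω₁ m x).measurable'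
  have hlim : Tendsto (fun m : ℕ => fun ω₂ => infDist x (img θ₁ θ₂ Φ K ω₁ ω₂ (m:ℝ)))
      atTop (𝓝 (fun ω₂ => infDist x (omegaLimit θ₁ θ₂ Φ K ω₁ ω₂))) :=
    tendsto_pi_nhds.2 fun ω₂ => omega_infDist_tendsto hS ω₁ ω₂ x
  exact measurable_of_tendsto_metrizable hm hlim

end Meas

end Dynamics

theorem periodic_attractor_exists
    {Ω₁ Ω₂ X : Type*} [Nonempty Ω₁]
    [MetricSpace X] [CompleteSpace X] [SecondCountableTopology X]
    [MeasurableSpace X] [BorelSpace X]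
    [MeasurableSpace Ω₂] (P : Measure Ω₂) [IsProbabilityMeasure P]
    (θ₁ : ℝ → Ω₁ → Ω₁) (θ₂ : ℝ → Ω₂ → Ω₂)
    (hθ₁ : IsGroupAction θ₁) (hθ₂ : IsGroupAction θ₂)
    (hθ₂meas : Measurable fun p : ℝ × Ω₂ => θ₂ p.1 p.2)
    (hθ₂pres : ∀ t : ℝ, MeasurePreserving (θ₂ t) P P)
    (Φ : ℝ → Ω₁ → Ω₂ → X → X)
    (hΦ : IsCocycle θ₁ θ₂ Φ)
    (T : ℝ) (hT : 0 < T)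
    (hper : ∀ t : ℝ, 0 ≤ t → ∀ (ω₁ : Ω₁) (ω₂ : Ω₂) (x : X),
      Φ t (θ₁ T ω₁) ω₂ x = Φ t ω₁ ω₂ x)
    (𝒟 : Set (Ω₁ → Ω₂ → Set X))
    (h𝒟ne : FamiliesOfNonemptySets 𝒟)
    (h𝒟nc : NeighborhoodClosed 𝒟)
    (h𝒟inv : (fun D : Ω₁ → Ω₂ → Set X => fun ω₁ ω₂ => D (θ₁ T ω₁) ω₂) '' 𝒟 = 𝒟)
    (hac : AsymptoticallyCompact θ₁ θ₂ Φ 𝒟)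
    (K : Ω₁ → Ω₂ → Set X)
    (hK : IsClosedMeasurableAbsorbingSet θ₁ θ₂ Φ P 𝒟 K) :
    ∃ A : Ω₁ → Ω₂ → Set X, IsPullbackAttractor θ₁ θ₂ Φ P 𝒟 A ∧
      (∀ A' : Ω₁ → Ω₂ → Set X, IsPullbackAttractor θ₁ θ₂ Φ P 𝒟 A' → A' = A) ∧
      ∀ (ω₁ : Ω₁) (ω₂ : Ω₂), A (θ₁ T ω₁) ω₂ = A ω₁ ω₂ := by
  classical
  obtain ⟨⟨hKmem, hKabs⟩, hKclne, hKm⟩ := hK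
  have hS : Setup θ₁ θ₂ Φ 𝒟 K :=
    ⟨hθ₁, hθ₂, hΦ, hac, hKmem, hKabs, fun ω₁ ω₂ => (hKclne ω₁ ω₂).1,
      fun ω₁ ω₂ => (hKclne ω₁ ω₂).2⟩
  set A : Ω₁ → Ω₂ → Set X := fun ω₁ ω₂ => omegaLimit θ₁ θ₂ Φ K ω₁ ω₂ with hA_def
  have hAattr : IsPullbackAttractor θ₁ θ₂ Φ P 𝒟 A :=
    { mem := omega_mem hS h𝒟nc
      compact := omega_isCompact hS
      measurable := fun ω₁ x => omega_nullMeasurable P hS hθ₂meas hθ₂pres hKm ω₁ x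
      invariant := omega_invariant hS
      attracts := fun B hB => omega_attracts hS B hB }
  have huniq : ∀ A'' : Ω₁ → Ω₂ → Set X,
      IsPullbackAttractor θ₁ θ₂ Φ P 𝒟 A'' → A'' = A :=
    fun A'' h => attractor_unique hθ₁ hθ₂ h hAattr
  set A' : Ω₁ → Ω₂ → Set X := fun ω₁ ω₂ => A (θ₁ T ω₁) ω₂ with hA'_def
  have hA'attr : IsPullbackAttractor θ₁ θ₂ Φ P 𝒟 A' := by
    refine { mem := ?_, compact := fun ω₁ ω₂ => hAattr.compact _ _,
             measurable := fun ω₁ x => hAattr.measurable _ x,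
             invariant := ?_, attracts := ?_ }
    · rw [← h𝒟inv]
      exact ⟨A, hAattr.mem, rfl⟩
    · intro t ht ω₁ ω₂
      have e1 : Φ t ω₁ ω₂ '' A (θ₁ T ω₁) ω₂ = Φ t (θ₁ T ω₁) ω₂ '' A (θ₁ T ω₁) ω₂ :=
        image_congr fun z _ => (hper t ht ω₁ ω₂ z).symm
      show Φ t ω₁ ω₂ '' A (θ₁ T ω₁) ω₂ = A (θ₁ T (θ₁ t ω₁)) (θ₂ t ω₂)
      rw [e1, hAattr.invariant t ht (θ₁ T ω₁) ω₂]
      have e2 : θ₁ t (θ₁ T ω₁) = θ₁ (T + t) ω₁ := hθ₁.shift rfl ω₁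
      have e3 : θ₁ T (θ₁ t ω₁) = θ₁ (t + T) ω₁ := hθ₁.shift rfl ω₁
      rw [e2, e3, add_comm]
    · intro B hB ω₁ ω₂
      have hB' := hB
      rw [← h𝒟inv] at hB'
      obtain ⟨C, hC, hCB⟩ := hB'
      have hatt := hAattr.attracts C hC (θ₁ T ω₁) ω₂
      show Tendsto (fun t : ℝ => hausSemidist
        (Φ t (θ₁ (-t) ω₁) (θ₂ (-t) ω₂) '' B (θ₁ (-t) ω₁) (θ₂ (-t) ω₂))
        (A (θ₁ T ω₁) ω₂)) atTop (𝓝 0)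
      refine Tendsto.congr' ?_ hatt
      filter_upwards [eventually_ge_atTop (0:ℝ)] with t ht
      have e1 : θ₁ (-t) (θ₁ T ω₁) = θ₁ T (θ₁ (-t) ω₁) := by
        have i1 : θ₁ (-t) (θ₁ T ω₁) = θ₁ (T + -t) ω₁ := hθ₁.shift rfl ω₁
        have i2 : θ₁ T (θ₁ (-t) ω₁) = θ₁ (-t + T) ω₁ := hθ₁.shift rfl ω₁
        rw [i1, i2, add_comm]
      have e2 : C (θ₁ T (θ₁ (-t) ω₁)) (θ₂ (-t) ω₂) = B (θ₁ (-t) ω₁) (θ₂ (-t) ω₂) := by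
        rw [← hCB]
      congr 1
      rw [e1, e2]
      exact image_congr fun z _ => hper t ht (θ₁ (-t) ω₁) (θ₂ (-t) ω₂) z
  refine ⟨A, hAattr, huniq, fun ω₁ ω₂ => ?_⟩
  have h := huniq A' hA'attr
  exact congrFun (congrFun h ω₁) ω₂


end RDS
end

section
/- Let 𝒟 be a neighborhood closed collection of families of nonempty subsets of X, let Φ be a continuous periodic cocycle on X with period T > 0, and suppose Φ has a 𝒟-pullback attractor 𝒜 ∈ 𝒟. Then 𝒜 is periodic with period T (i.e. 𝒜(θ₁(T)ω₁,ω₂) = 𝒜(ω₁,ω₂) for all ω₁, ω₂) if and only if Φ has a closed measurable 𝒟-pullback absorbing set K ∈ 𝒟 with K periodic with period T (i.e. K(θ₁(T)ω₁,ω₂) = K(ω₁,ω₂) for all ω₁, ω₂). -/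
open MeasureTheory Filter Set Topology
open scoped ENNReal

namespace RDS

variable {Ω₁ Ω₂ X : Type*} [MetricSpace X] [MeasurableSpace X] [MeasurableSpace Ω₂]

/-- Auxiliary: the `infEdist` to an open set agrees with the `infEdist` to its
intersection with a dense set. -/
lemma infEdist_inter_dense {Y : Type*} [PseudoEMetricSpace Y] {D U : Set Y}
    (hD : Dense D) (hU : IsOpen U) (x : Y) :
    EMetric.infEdist x (U ∩ D) = EMetric.infEdist x U := by
  refine le_antisymm ?_ (EMetric.infEdist_anti inter_subset_left)
  calc EMetric.infEdist x (U ∩ D) = EMetric.infEdist x (closure (U ∩ D)) :=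
        (EMetric.infEdist_closure).symm
    _ ≤ EMetric.infEdist x U :=
        EMetric.infEdist_anti (hD.open_subset_closure_inter hU)

/-- Auxiliary: a two-valued function defined by a null measurable condition is
null measurable. -/
lemma nullMeasurable_ite_const {α β : Type*} [MeasurableSpace α] [MeasurableSpace β]
    {μ : MeasureTheory.Measure α} {p : α → Prop} [DecidablePred p]
    (hp : MeasureTheory.NullMeasurableSet {a | p a} μ) (c d : β) :
    MeasureTheory.NullMeasurable (fun a => if p a then c else d) μ := by
  intro s _
  by_cases hc : c ∈ s <;> by_cases hd : d ∈ s
  · have : (fun a => if p a then c else d) ⁻¹' s = Set.univ := by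
      ext a; by_cases h : p a <;> simp [h, hc, hd]
    rw [this]; exact MeasureTheory.nullMeasurableSet_univ
  · have : (fun a => if p a then c else d) ⁻¹' s = {a | p a} := by
      ext a; by_cases h : p a <;> simp [h, hc, hd]
    rw [this]; exact hp
  · have : (fun a => if p a then c else d) ⁻¹' s = {a | p a}ᶜ := by
      ext a; by_cases h : p a <;> simp [h, hc, hd]
    rw [this]; exact hp.compl
  · have : (fun a => if p a then c else d) ⁻¹' s = ∅ := by
      ext a; by_cases h : p a <;> simp [h, hc, hd]
    rw [this]; exact MeasureTheory.nullMeasurableSet_empty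

lemma le_hausSemidist {X : Type*} [MetricSpace X] {C B : Set X} {y : X} (hy : y ∈ C) :
    EMetric.infEdist y B ≤ hausSemidist C B :=
  le_iSup₂ (f := fun z (_ : z ∈ C) => EMetric.infEdist z B) y hy

theorem periodic_attractor_iff_periodic_absorbing
    {Ω₁ Ω₂ X : Type*} [Nonempty Ω₁]
    [MetricSpace X] [CompleteSpace X] [SecondCountableTopology X]
    [MeasurableSpace X] [BorelSpace X]
    [MeasurableSpace Ω₂] (P : Measure Ω₂) [IsProbabilityMeasure P]
    (θ₁ : ℝ → Ω₁ → Ω₁) (θ₂ : ℝ → Ω₂ → Ω₂)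
    (hθ₁ : IsGroupAction θ₁) (hθ₂ : IsGroupAction θ₂)
    (hθ₂meas : Measurable fun p : ℝ × Ω₂ => θ₂ p.1 p.2)
    (hθ₂pres : ∀ t : ℝ, MeasurePreserving (θ₂ t) P P)
    (Φ : ℝ → Ω₁ → Ω₂ → X → X)
    (hΦ : IsCocycle θ₁ θ₂ Φ)
    (T : ℝ) (hT : 0 < T)
    (hper : ∀ t : ℝ, 0 ≤ t → ∀ (ω₁ : Ω₁) (ω₂ : Ω₂) (x : X),
      Φ t (θ₁ T ω₁) ω₂ x = Φ t ω₁ ω₂ x)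
    (𝒟 : Set (Ω₁ → Ω₂ → Set X))
    (h𝒟ne : FamiliesOfNonemptySets 𝒟)
    (h𝒟nc : NeighborhoodClosed 𝒟)
    (A : Ω₁ → Ω₂ → Set X)
    (hA : IsPullbackAttractor θ₁ θ₂ Φ P 𝒟 A) :
    (∀ (ω₁ : Ω₁) (ω₂ : Ω₂), A (θ₁ T ω₁) ω₂ = A ω₁ ω₂) ↔
      ∃ K : Ω₁ → Ω₂ → Set X, IsClosedMeasurableAbsorbingSet θ₁ θ₂ Φ P 𝒟 K ∧
        ∀ (ω₁ : Ω₁) (ω₂ : Ω₂), K (θ₁ T ω₁) ω₂ = K ω₁ ω₂ := by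

  classical
  constructor
  · -- A periodic implies existence of a periodic absorbing set
    intro hAper
    obtain ⟨ε, hε, hnc⟩ := h𝒟nc A hA.mem
    have hδ : 0 < ε / 2 := half_pos hε
    set δ := ε / 2 with hδdef
    set K : Ω₁ → Ω₂ → Set X := fun ω₁ ω₂ => closure (Metric.thickening δ (A ω₁ ω₂))
      with hKdef
    have hKne : ∀ ω₁ ω₂, (K ω₁ ω₂).Nonempty := by
      intro ω₁ ω₂
      obtain ⟨a, ha⟩ := h𝒟ne A hA.mem ω₁ ω₂
      exact ⟨a, subset_closure (Metric.self_subset_thickening hδ _ ha)⟩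
    have hKmem : K ∈ 𝒟 := by
      apply hnc
      intro ω₁ ω₂
      refine ⟨hKne ω₁ ω₂, ?_⟩
      exact (Metric.closure_thickening_subset_cthickening δ _).trans
        (Metric.cthickening_subset_thickening' hε (by linarith) _)
    refine ⟨K, ⟨⟨hKmem, ?_⟩, fun ω₁ ω₂ => ⟨isClosed_closure, hKne ω₁ ω₂⟩, ?_⟩, ?_⟩
    · -- absorbing
      intro ω₁ ω₂ B hB
      have hev := (hA.attracts B hB ω₁ ω₂).eventually
        (gt_mem_nhds (ENNReal.ofReal_pos.2 hδ))
      rw [eventually_atTop] at hev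
      obtain ⟨a, ha⟩ := hev
      refine ⟨max a 1, lt_of_lt_of_le one_pos (le_max_right _ _), fun t htt y hy => ?_⟩
      apply subset_closure
      exact Metric.mem_thickening_iff_infEdist_lt.2
        (lt_of_le_of_lt (le_hausSemidist hy) (ha t ((le_max_left _ _).trans htt)))
    · -- measurability
      intro ω₁ x
      obtain ⟨D, hDc, hDd⟩ := TopologicalSpace.exists_countable_dense X
      have : Countable ↥D := hDc.to_subtype
      set g : ↥D → Ω₂ → ℝ≥0∞ := fun y ω₂ =>
        if Metric.infDist (y : X) (A ω₁ ω₂) < δ then edist x (y : X) else ⊤ with hgdef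
      have hg : ∀ y : ↥D, AEMeasurable (g y) P := fun y =>
        NullMeasurable.aemeasurable (nullMeasurable_ite_const
          ((hA.measurable ω₁ (y : X)) measurableSet_Iio) _ _)
      have hiInf : AEMeasurable (fun ω₂ => ⨅ y : ↥D, g y ω₂) P := AEMeasurable.iInf hg
      have key : (fun ω₂ => Metric.infDist x (K ω₁ ω₂))
          = fun ω₂ => (⨅ y : ↥D, g y ω₂).toReal := by
        funext ω₂
        have hne : (A ω₁ ω₂).Nonempty := h𝒟ne A hA.mem ω₁ ω₂
        have hmem : ∀ y : X, y ∈ Metric.thickening δ (A ω₁ ω₂) ↔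
            Metric.infDist y (A ω₁ ω₂) < δ := by
          intro y
          rw [Metric.mem_thickening_iff_infEdist_lt,
            ENNReal.lt_ofReal_iff_toReal_lt (Metric.infEdist_ne_top hne)]
          rfl
        have h1 : EMetric.infEdist x (Metric.thickening δ (A ω₁ ω₂))
            = ⨅ y : ↥D, g y ω₂ := by
          refine le_antisymm (le_iInf fun y => ?_) ?_
          · by_cases hy : Metric.infDist (y : X) (A ω₁ ω₂) < δ
            · simp only [hgdef]
              rw [if_pos hy]
              exact EMetric.infEdist_le_edist_of_mem ((hmem _).2 hy)
            · simp only [hgdef]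
              rw [if_neg hy]
              exact le_top
          · rw [← infEdist_inter_dense hDd Metric.isOpen_thickening x]
            refine EMetric.le_infEdist.2 fun y hy => ?_
            refine (iInf_le (fun y : ↥D => g y ω₂) ⟨y, hy.2⟩).trans ?_
            simp only [hgdef]
            rw [if_pos ((hmem y).1 hy.1)]
        show (EMetric.infEdist x (closure (Metric.thickening δ (A ω₁ ω₂)))).toReal = _
        rw [show EMetric.infEdist x (closure (Metric.thickening δ (A ω₁ ω₂))) = EMetric.infEdist x (Metric.thickening δ (A ω₁ ω₂)) from EMetric.infEdist_closure, h1]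
      rw [key]
      exact hiInf.ennreal_toReal.nullMeasurable
    · intro ω₁ ω₂
      show closure (Metric.thickening δ (A (θ₁ T ω₁) ω₂)) = _
      rw [hAper ω₁ ω₂]
  · -- periodic absorbing set implies A periodic
    rintro ⟨K, ⟨⟨hKmem, hKabs⟩, hKcl, hKmeas⟩, hKper⟩
    have hid : ∀ (s : ℝ) (ω₁ : Ω₁), θ₁ s (θ₁ (-s) ω₁) = ω₁ := fun s ω₁ => by
      rw [← hθ₁.2 (-s) s ω₁, neg_add_cancel, hθ₁.1]
    have hid2 : ∀ (s : ℝ) (ω₂ : Ω₂), θ₂ s (θ₂ (-s) ω₂) = ω₂ := fun s ω₂ => by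
      rw [← hθ₂.2 (-s) s ω₂, neg_add_cancel, hθ₂.1]
    have hAK : ∀ ω₁ ω₂, A ω₁ ω₂ ⊆ K ω₁ ω₂ := by
      intro ω₁ ω₂
      obtain ⟨T₀, hT₀, habs⟩ := hKabs ω₁ ω₂ A hA.mem
      have hinv := hA.invariant T₀ hT₀.le (θ₁ (-T₀) ω₁) (θ₂ (-T₀) ω₂)
      rw [hid, hid2] at hinv
      rw [← hinv]
      exact habs T₀ le_rfl
    have hAΩ : ∀ ω₁ ω₂, A ω₁ ω₂ = omegaLimit θ₁ θ₂ Φ K ω₁ ω₂ := by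
      intro ω₁ ω₂
      apply Set.Subset.antisymm
      · intro x hx
        simp only [omegaLimit, mem_iInter]
        intro τ hτ
        apply subset_closure
        refine mem_iUnion₂.2 ⟨τ, self_mem_Ici, ?_⟩
        have hinv := hA.invariant τ (mem_Ici.1 hτ) (θ₁ (-τ) ω₁) (θ₂ (-τ) ω₂)
        rw [hid, hid2] at hinv
        rw [← hinv] at hx
        exact image_mono (hAK _ _) hx
      · intro x hx
        simp only [omegaLimit, mem_iInter] at hx
        have hcth : ∀ r : ℝ, 0 < r → x ∈ Metric.cthickening r (A ω₁ ω₂) := by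
          intro r hr
          have hev := (hA.attracts K hKmem ω₁ ω₂).eventually
            (gt_mem_nhds (ENNReal.ofReal_pos.2 hr))
          rw [eventually_atTop] at hev
          obtain ⟨a, ha⟩ := hev
          have hx' := hx (max a 0) (mem_Ici.2 (le_max_right _ _))
          have hsub : (⋃ t ∈ Ici (max a 0),
              Φ t (θ₁ (-t) ω₁) (θ₂ (-t) ω₂) '' K (θ₁ (-t) ω₁) (θ₂ (-t) ω₂))
              ⊆ Metric.cthickening r (A ω₁ ω₂) := by
            refine iUnion₂_subset fun t ht y hy => ?_
            refine Metric.thickening_subset_cthickening r _ ?_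
            exact Metric.mem_thickening_iff_infEdist_lt.2
              (lt_of_le_of_lt (le_hausSemidist hy)
                (ha t ((le_max_left _ _).trans (mem_Ici.1 ht))))
          exact closure_minimal hsub Metric.isClosed_cthickening hx'
        have h0 : EMetric.infEdist x (A ω₁ ω₂) = 0 := by
          refine le_antisymm (ENNReal.le_of_forall_pos_le_add fun p hp _ => ?_) zero_le
          rw [zero_add]
          have hx' := hcth (p : ℝ) (by exact_mod_cast hp)
          rwa [Metric.mem_cthickening_iff, ENNReal.ofReal_coe_nnreal] at hx'
        have := EMetric.mem_closure_iff_infEdist_zero.2 h0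
        rwa [(hA.compact ω₁ ω₂).isClosed.closure_eq] at this
    have hΩper : ∀ ω₁ ω₂, omegaLimit θ₁ θ₂ Φ K (θ₁ T ω₁) ω₂
        = omegaLimit θ₁ θ₂ Φ K ω₁ ω₂ := by
      intro ω₁ ω₂
      unfold omegaLimit
      refine iInter₂_congr fun τ hτ => ?_
      refine congrArg closure (iUnion₂_congr fun t ht => ?_)
      have ht0 : (0 : ℝ) ≤ t := le_trans (mem_Ici.1 hτ) (mem_Ici.1 ht)
      have hcomm : θ₁ (-t) (θ₁ T ω₁) = θ₁ T (θ₁ (-t) ω₁) := by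
        rw [← hθ₁.2 T (-t) ω₁, ← hθ₁.2 (-t) T ω₁, add_comm]
      rw [hcomm, hKper]
      exact image_congr fun y _ => hper t ht0 _ _ _
    intro ω₁ ω₂
    rw [hAΩ, hAΩ, hΩper]



end RDS
end
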